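/- Fix matrices (H_τ)_{τ≥1}, an integer d ≥ 1, ε ∈ (0,1/2), and δ > 0 with ε + δ < 1. Let V = (V₁,…,V_{nd}) have i.i.d. Bernoulli(ε) entries. Then the probability that there exists c ∈ C_d with 2·#{i : c_i = 1 and V_i = 1} ≥ ‖c‖ is at most Σ_{w : minW(d) ≤ w ≤ 2nd(ε+δ)} numW(w,d)·(4ε(1−ε))^{w/2} + 2^{−nd·KL(ε+δ‖ε)}, where KL(q‖ε) = q·log₂(q/ε) + (1−q)·log₂((1−q)/(1−ε)). In particular, if minW(d) > 2nd(ε+δ), the probability is at most 2^{−nd·KL(ε+δ‖ε)}. -/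

import Mathlib

/-!
STATEMENT 16: Over BSC(ε), `ε ∈ (0,1/2)`, with `δ > 0`, `ε + δ < 1`, the probability that
some `c ∈ C_d` has at least half of its support flipped is at most
`∑_{w : minW(d) ≤ w ≤ 2nd(ε+δ)} numW(w,d)·(4ε(1−ε))^{w/2} + 2^{−nd·KL(ε+δ‖ε)}`.
In particular, if `minW(d) > 2nd(ε+δ)`, it is at most `2^{−nd·KL(ε+δ‖ε)}`.
Here `minW(d) ≤ w` is expressed as `∃ c ∈ C_d, ‖c‖ ≤ w`, and `minW(d) > 2nd(ε+δ)` as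
`∀ c ∈ C_d, 2nd(ε+δ) < ‖c‖` (these hold verbatim also when `C_d = ∅`, i.e. `minW(d) = ∞`).
-/

open scoped BigOperators

/-- Binary entropy function in bits (with `H(0) = H(1) = 0`, since `Real.logb 2 0 = 0`). -/
noncomputable def binH (x : ℝ) : ℝ := -(x * Real.logb 2 x) - (1 - x) * Real.logb 2 (1 - x)

/-- The `n̄d × nd` block lower-triangular Toeplitz matrix `𝐇_d` whose `(i,j)`-th block is
`H (i−j+1)` for `i ≥ j` and `0` otherwise (blocks are indexed from `0`, so the block
sequence used is `H 1, H 2, …, H d`). -/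
def toep (nb n : ℕ) (H : ℕ → Matrix (Fin nb) (Fin n) (ZMod 2)) (d : ℕ) :
    Matrix (Fin d × Fin nb) (Fin d × Fin n) (ZMod 2) :=
  fun p q => if (q.1 : ℕ) ≤ (p.1 : ℕ) then H ((p.1 : ℕ) - (q.1 : ℕ) + 1) p.2 q.2 else 0

/-- A block vector `(c₁, …, c_d) ∈ (F₂ⁿ)^d` flattened into a vector indexed by `Fin d × Fin n`. -/
def flat {d n : ℕ} (c : Fin d → Fin n → ZMod 2) : Fin d × Fin n → ZMod 2 :=
  fun q => c q.1 q.2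

/-- Hamming weight `‖c‖` of a block vector. -/
def wt {d n : ℕ} (c : Fin d → Fin n → ZMod 2) : ℕ := hammingNorm (flat c)

/-- `C_d = {c ∈ (F₂ⁿ)^d : 𝐇_d c = 0 and c₁ ≠ 0}`. -/
def Cset (nb n : ℕ) (H : ℕ → Matrix (Fin nb) (Fin n) (ZMod 2)) (d : ℕ) (hd : 0 < d) :
    Finset (Fin d → Fin n → ZMod 2) :=
  Finset.univ.filter fun c =>
    Matrix.mulVec (toep nb n H d) (flat c) = 0 ∧ c ⟨0, hd⟩ ≠ 0

/-- `numW(w,d) = #{c ∈ C_d : ‖c‖ = w}`. -/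
def numW (nb n : ℕ) (H : ℕ → Matrix (Fin nb) (Fin n) (ZMod 2)) (d : ℕ) (hd : 0 < d)
    (w : ℕ) : ℕ :=
  ((Cset nb n H d hd).filter fun c => wt c = w).card

section Helpers
open scoped Classical

lemma sum_prod_zmod {ι : Type*} [Fintype ι] [DecidableEq ι] (f : ι → ZMod 2 → ℝ) :
    ∑ V : ι → ZMod 2, ∏ i, f i (V i) = ∏ i, (f i 0 + f i 1) := by
  rw [← Fintype.prod_sum f]
  congr 1
  ext i
  show ∑ j : Fin 2, f i j = _
  exact Fin.sum_univ_two (f i)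

lemma rpow_shift (a b S s t : ℝ) (ha : 0 < a) (hab : a ≤ b) (hst : s ≤ t) :
    a ^ t * b ^ (S - t) ≤ a ^ s * b ^ (S - s) := by
  have hb : 0 < b := lt_of_lt_of_le ha hab
  have h1 : a ^ (t - s) ≤ b ^ (t - s) :=
    Real.rpow_le_rpow ha.le hab (by linarith)
  have ea : a ^ t = a ^ s * a ^ (t - s) := by
    rw [← Real.rpow_add ha]; ring_nf
  have eb : b ^ (S - s) = b ^ (S - t) * b ^ (t - s) := by
    rw [← Real.rpow_add hb]; ring_nf
  rw [ea, eb]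
  have := Real.rpow_nonneg ha.le (t - s)
  nlinarith [Real.rpow_nonneg ha.le s, Real.rpow_nonneg hb.le (S - t),
    mul_le_mul_of_nonneg_left h1 (mul_nonneg (Real.rpow_nonneg ha.le s) (Real.rpow_nonneg hb.le (S - t)))]

lemma prod_ite_const {ι : Type*} [Fintype ι] (p : ι → Prop) [DecidablePred p] (a b : ℝ) :
    ∏ i, (if p i then a else b) =
      a ^ (Finset.univ.filter p).card * b ^ (Fintype.card ι - (Finset.univ.filter p).card) := by
  rw [Finset.prod_ite (fun _ => a) (fun _ => b), Finset.prod_const, Finset.prod_const]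
  congr 2
  have := Finset.card_filter_add_card_filter_not (s := (Finset.univ : Finset ι)) p
  simp only [Finset.card_univ] at this
  omega

lemma chernoff_pt (ε q : ℝ) (hε0 : 0 < ε) (hεq : ε < q) (hq1 : q < 1)
    (N m : ℕ) (hm : m ≤ N) (h : (N:ℝ) * q ≤ (m:ℝ)) :
    ε ^ m * (1-ε) ^ (N-m) ≤
      2 ^ (-(N:ℝ) * (q * Real.logb 2 (q/ε) + (1-q) * Real.logb 2 ((1-q)/(1-ε)))) *
        (q ^ m * (1-q) ^ (N-m)) := by
  have hq0 : 0 < q := hε0.trans hεq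
  have hq1' : 0 < 1 - q := by linarith
  have hε1' : 0 < 1 - ε := by linarith
  set a : ℝ := ε / q with ha_def
  set b : ℝ := (1-ε) / (1-q) with hb_def
  have ha : 0 < a := div_pos hε0 hq0
  have hb : 0 < b := div_pos hε1' hq1'
  have hab : a ≤ b := by
    rw [ha_def, hb_def, div_le_div_iff₀ hq0 hq1']
    nlinarith
  have e2 : (2:ℝ) ^ (-(N:ℝ) * (q * Real.logb 2 (q/ε) + (1-q) * Real.logb 2 ((1-q)/(1-ε))))
      = a ^ ((N:ℝ)*q) * b ^ ((N:ℝ) - (N:ℝ)*q) := by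
    have l1 : Real.logb 2 a = - Real.logb 2 (q/ε) := by
      rw [ha_def, Real.logb_div hε0.ne' hq0.ne', Real.logb_div hq0.ne' hε0.ne']; ring
    have l2 : Real.logb 2 b = - Real.logb 2 ((1-q)/(1-ε)) := by
      rw [hb_def, Real.logb_div hε1'.ne' hq1'.ne', Real.logb_div hq1'.ne' hε1'.ne']; ring
    have eE : -(N:ℝ) * (q * Real.logb 2 (q/ε) + (1-q) * Real.logb 2 ((1-q)/(1-ε)))
        = Real.logb 2 a * ((N:ℝ)*q) + Real.logb 2 b * ((N:ℝ) - (N:ℝ)*q) := by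
      rw [l1, l2]; ring
    rw [eE, Real.rpow_add (by norm_num : (0:ℝ) < 2),
      Real.rpow_mul (by norm_num : (0:ℝ) ≤ 2), Real.rpow_mul (by norm_num : (0:ℝ) ≤ 2),
      Real.rpow_logb (by norm_num) (by norm_num) ha,
      Real.rpow_logb (by norm_num) (by norm_num) hb]
  have key : a ^ m * b ^ (N-m) ≤ a ^ ((N:ℝ)*q) * b ^ ((N:ℝ) - (N:ℝ)*q) := by
    have := rpow_shift a b (N:ℝ) ((N:ℝ)*q) (m:ℝ) ha hab h
    rw [Real.rpow_natCast,
      show (N:ℝ) - (m:ℝ) = ((N-m : ℕ):ℝ) by rw [Nat.cast_sub hm],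
      Real.rpow_natCast] at this
    exact this
  have hεa : ε = a * q := by rw [ha_def]; field_simp
  have hεb : (1:ℝ) - ε = b * (1-q) := by rw [hb_def]; field_simp
  calc ε ^ m * (1-ε) ^ (N-m)
      = (a ^ m * b ^ (N-m)) * (q ^ m * (1-q) ^ (N-m)) := by
        rw [hεb, hεa, mul_pow, mul_pow]; ring
    _ ≤ (a ^ ((N:ℝ)*q) * b ^ ((N:ℝ) - (N:ℝ)*q)) * (q ^ m * (1-q) ^ (N-m)) := by
        apply mul_le_mul_of_nonneg_right key (by positivity)
    _ = _ := by rw [e2]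

lemma half_pt (ε : ℝ) (hε0 : 0 < ε) (hε1 : ε < 1/2) (w m : ℕ) (hm : m ≤ w) (h : w ≤ 2*m) :
    ε ^ m * (1-ε) ^ (w-m) ≤ (ε*(1-ε)) ^ ((w:ℝ)/2) := by
  have hε1' : 0 < 1 - ε := by linarith
  have key := rpow_shift ε (1-ε) (w:ℝ) ((w:ℝ)/2) (m:ℝ) hε0 (by linarith)
    (by have : (w:ℝ) ≤ 2*(m:ℝ) := by exact_mod_cast h
        linarith)
  rw [Real.rpow_natCast,
    show (w:ℝ) - (m:ℝ) = ((w-m : ℕ):ℝ) by rw [Nat.cast_sub hm],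
    Real.rpow_natCast,
    show (w:ℝ) - (w:ℝ)/2 = (w:ℝ)/2 by ring] at key
  calc ε ^ m * (1-ε) ^ (w-m) ≤ ε ^ ((w:ℝ)/2) * (1-ε) ^ ((w:ℝ)/2) := key
    _ = (ε*(1-ε)) ^ ((w:ℝ)/2) := (Real.mul_rpow hε0.le hε1'.le).symm

lemma four_pow (ε : ℝ) (hε0 : 0 < ε) (hε1 : ε < 1/2) (w : ℕ) :
    (4*ε*(1-ε)) ^ ((w:ℝ)/2) = 2 ^ w * (ε*(1-ε)) ^ ((w:ℝ)/2) := by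
  have hε1' : 0 < 1 - ε := by linarith
  have h4 : (4:ℝ) ^ ((w:ℝ)/2) = 2 ^ w := by
    rw [show (4:ℝ) = 2 ^ (2:ℝ) by
        rw [show (2:ℝ) = ((2:ℕ):ℝ) by norm_num, Real.rpow_natCast]; norm_num,
      ← Real.rpow_mul (by norm_num : (0:ℝ) ≤ 2)]
    rw [show (2:ℝ) * ((w:ℝ)/2) = (w:ℝ) by ring, Real.rpow_natCast]
  rw [show (4:ℝ)*ε*(1-ε) = 4*(ε*(1-ε)) by ring,
    Real.mul_rpow (by norm_num) (by positivity), h4]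

lemma sum_prob_one {ι : Type*} [Fintype ι] [DecidableEq ι] (q : ℝ) :
    ∑ V : ι → ZMod 2, ∏ i, (if V i = 1 then q else 1-q) = 1 := by
  rw [sum_prod_zmod (fun i v => if v = 1 then q else 1-q)]
  norm_num

lemma free_count {ι : Type*} [Fintype ι] [DecidableEq ι] (ε : ℝ) (S : Finset ι) :
    ∑ V : ι → ZMod 2, ∏ i, (if i ∈ S then (1:ℝ) else (if V i = 1 then ε else 1-ε))
      = 2 ^ S.card := by
  rw [sum_prod_zmod (fun i v => if i ∈ S then (1:ℝ) else (if v = 1 then ε else 1-ε))]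
  have : ∀ i : ι, ((if i ∈ S then (1:ℝ) else (if (0:ZMod 2) = 1 then ε else 1-ε)) +
      (if i ∈ S then (1:ℝ) else (if (1:ZMod 2) = 1 then ε else 1-ε)))
      = if i ∈ S then (2:ℝ) else 1 := by
    intro i
    have h0 : ¬ ((0:ZMod 2) = 1) := by decide
    by_cases h : i ∈ S
    · simp [h]; norm_num
    · simp only [h, if_false, if_neg h0, if_true]; simp
  rw [Finset.prod_congr rfl (fun i _ => this i), Finset.prod_ite_mem,
    Finset.univ_inter, Finset.prod_const]

lemma norm_eq_card {ι : Type*} [Fintype ι] (g : ι → ZMod 2) :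
    hammingNorm g = (Finset.univ.filter fun i => g i = 1).card := by
  have h : ∀ x : ZMod 2, x ≠ 0 ↔ x = 1 := by decide
  unfold hammingNorm
  exact congrArg Finset.card (Finset.filter_congr fun i _ => h (g i))

lemma event_bound {ι : Type*} [Fintype ι] [DecidableEq ι] (ε : ℝ) (hε0 : 0 < ε) (hε1 : ε < 1/2)
    (g : ι → ZMod 2) :
    ∑ V : ι → ZMod 2,
      (if hammingNorm g ≤ 2 * (Finset.univ.filter fun i => g i = 1 ∧ V i = 1).card
       then ∏ i, (if V i = 1 then ε else 1-ε) else 0)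
    ≤ (4*ε*(1-ε)) ^ ((hammingNorm g : ℝ)/2) := by
  have hε1' : 0 < 1 - ε := by linarith
  set S : Finset ι := Finset.univ.filter fun i => g i = 1 with hS
  set w : ℕ := hammingNorm g with hw
  have hwS : w = S.card := norm_eq_card g
  have step : ∀ V : ι → ZMod 2,
      (if w ≤ 2 * (Finset.univ.filter fun i => g i = 1 ∧ V i = 1).card
       then ∏ i, (if V i = 1 then ε else 1-ε) else 0)
      ≤ (ε*(1-ε)) ^ ((w:ℝ)/2) *
          ∏ i, (if i ∈ S then (1:ℝ) else (if V i = 1 then ε else 1-ε)) := by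
    intro V
    have hnn : (0:ℝ) ≤ (ε*(1-ε)) ^ ((w:ℝ)/2) *
        ∏ i, (if i ∈ S then (1:ℝ) else (if V i = 1 then ε else 1-ε)) := by
      apply mul_nonneg (Real.rpow_nonneg (by positivity) _)
      apply Finset.prod_nonneg
      intro i _; split_ifs <;> linarith
    split_ifs with hev
    · -- split the product over S and its complement
      have hsplit : (∏ i, (if V i = 1 then ε else 1-ε))
          = (∏ i, (if i ∈ S then (if V i = 1 then ε else 1-ε) else 1)) *
            (∏ i, (if i ∈ S then (1:ℝ) else (if V i = 1 then ε else 1-ε))) := by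
        rw [← Finset.prod_mul_distrib]
        apply Finset.prod_congr rfl
        intro i _; split_ifs <;> ring
      rw [hsplit]
      apply mul_le_mul_of_nonneg_right _ (by
        apply Finset.prod_nonneg; intro i _; split_ifs <;> linarith)
      -- the product over S is ε^m (1-ε)^(w-m)
      set m : ℕ := (S.filter fun i => V i = 1).card with hm
      have hmle : m ≤ S.card := Finset.card_le_card (Finset.filter_subset _ _)
      have hprodS : (∏ i, (if i ∈ S then (if V i = 1 then ε else 1-ε) else 1))
          = ε ^ m * (1-ε) ^ (w - m) := by
        rw [Finset.prod_ite_mem, Finset.univ_inter,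
          Finset.prod_ite (fun _ => ε) (fun _ => 1-ε), Finset.prod_const, Finset.prod_const]
        congr 2
        have := Finset.card_filter_add_card_filter_not
          (s := S) (fun i => V i = 1)
        omega
      rw [hprodS]
      have hfe : (Finset.univ.filter fun i => g i = 1 ∧ V i = 1) =
          S.filter fun i => V i = 1 := by
        rw [hS, Finset.filter_filter]
      have hev' : w ≤ 2 * m := by rw [hm, ← hfe]; exact hev
      exact half_pt ε hε0 hε1 w m (by omega) hev'
    · exact hnn
  calc ∑ V : ι → ZMod 2, (if w ≤ 2 * (Finset.univ.filter fun i => g i = 1 ∧ V i = 1).card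
       then ∏ i, (if V i = 1 then ε else 1-ε) else 0)
      ≤ ∑ V : ι → ZMod 2, (ε*(1-ε)) ^ ((w:ℝ)/2) *
          ∏ i, (if i ∈ S then (1:ℝ) else (if V i = 1 then ε else 1-ε)) :=
        Finset.sum_le_sum fun V _ => step V
    _ = (ε*(1-ε)) ^ ((w:ℝ)/2) * 2 ^ S.card := by
        rw [← Finset.mul_sum, free_count]
    _ = (4*ε*(1-ε)) ^ ((w:ℝ)/2) := by rw [← hwS, four_pow ε hε0 hε1 w]; ring

lemma chernoff_sum {ι : Type*} [Fintype ι] [DecidableEq ι] (ε q : ℝ) (hε0 : 0 < ε) (hεq : ε < q)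
    (hq1 : q < 1) :
    ∑ V : ι → ZMod 2,
      (if ¬ (((Finset.univ.filter fun i => V i = 1).card : ℝ) ≤ (Fintype.card ι : ℝ) * q)
       then ∏ i, (if V i = 1 then ε else 1-ε) else 0)
    ≤ 2 ^ (-(Fintype.card ι : ℝ) *
        (q * Real.logb 2 (q/ε) + (1-q) * Real.logb 2 ((1-q)/(1-ε)))) := by
  have hq0 : 0 < q := hε0.trans hεq
  set K : ℝ := 2 ^ (-(Fintype.card ι : ℝ) *
      (q * Real.logb 2 (q/ε) + (1-q) * Real.logb 2 ((1-q)/(1-ε)))) with hK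
  have hK0 : 0 ≤ K := Real.rpow_nonneg (by norm_num) _
  have step : ∀ V : ι → ZMod 2,
      (if ¬ (((Finset.univ.filter fun i => V i = 1).card : ℝ) ≤ (Fintype.card ι : ℝ) * q)
       then ∏ i, (if V i = 1 then ε else 1-ε) else 0)
      ≤ K * ∏ i, (if V i = 1 then q else 1-q) := by
    intro V
    have hQnn : (0:ℝ) ≤ ∏ i, (if V i = 1 then q else 1-q) := by
      apply Finset.prod_nonneg; intro i _; split_ifs <;> linarith
    split_ifs with hA
    · exact mul_nonneg hK0 hQnn
    · push_neg at hA
      set m : ℕ := (Finset.univ.filter fun i => V i = 1).card with hm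
      have hmN : m ≤ Fintype.card ι := by
        rw [hm, ← Finset.card_univ]; exact Finset.card_le_card (Finset.filter_subset _ _)
      have hP : (∏ i, (if V i = 1 then ε else 1-ε)) = ε ^ m * (1-ε) ^ (Fintype.card ι - m) :=
        prod_ite_const (fun i => V i = 1) ε (1-ε)
      have hQ : (∏ i, (if V i = 1 then q else 1-q)) = q ^ m * (1-q) ^ (Fintype.card ι - m) :=
        prod_ite_const (fun i => V i = 1) q (1-q)
      rw [hP, hQ]
      exact chernoff_pt ε q hε0 hεq hq1 (Fintype.card ι) m hmN hA.le
  calc ∑ V : ι → ZMod 2,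
      (if ¬ (((Finset.univ.filter fun i => V i = 1).card : ℝ) ≤ (Fintype.card ι : ℝ) * q)
       then ∏ i, (if V i = 1 then ε else 1-ε) else 0)
      ≤ ∑ V : ι → ZMod 2, K * ∏ i, (if V i = 1 then q else 1-q) :=
        Finset.sum_le_sum fun V _ => step V
    _ = K := by rw [← Finset.mul_sum, sum_prob_one, mul_one]

lemma main_bound {ι α : Type*} [Fintype ι] [DecidableEq ι] [DecidableEq α] (ε q B : ℝ) (hε0 : 0 < ε)
    (hε1 : ε < 1/2) (hεq : ε < q) (hq1 : q < 1)
    (C : Finset α) (wtf : α → ℕ) (supp : α → ι → ZMod 2)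
    (hwt : ∀ c, wtf c = hammingNorm (supp c))
    (W : ℕ) (hW : Fintype.card ι = W)
    (hB : 2 * (W:ℝ) * q ≤ B) :
    ∑ V : ι → ZMod 2,
      (if ∃ c ∈ C, wtf c ≤ 2 * (Finset.univ.filter fun i => supp c i = 1 ∧ V i = 1).card
       then ∏ i, (if V i = 1 then ε else 1-ε) else 0)
    ≤ (∑ w ∈ Finset.range (W + 1),
        if (∃ c ∈ C, wtf c ≤ w) ∧ (w:ℝ) ≤ B then
          (((C.filter fun c => wtf c = w).card : ℝ)) * (4*ε*(1-ε)) ^ ((w:ℝ)/2) else 0)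
      + 2 ^ (-(W:ℝ) * (q * Real.logb 2 (q/ε) + (1-q) * Real.logb 2 ((1-q)/(1-ε)))) := by
  classical
  subst hW
  have hq0 : 0 < q := hε0.trans hεq
  have hε1' : 0 < 1 - ε := by linarith
  have h4nn : (0:ℝ) ≤ 4*ε*(1-ε) := by nlinarith
  have hPnn : ∀ V : ι → ZMod 2, (0:ℝ) ≤ ∏ i, (if V i = 1 then ε else 1-ε) := fun V =>
    Finset.prod_nonneg fun i _ => by split_ifs <;> linarith
  set Cf : Finset α := C.filter (fun c => (wtf c : ℝ) ≤ B) with hCf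
  have hwtle : ∀ c : α, wtf c ≤ Fintype.card ι := by
    intro c
    rw [hwt c, norm_eq_card, ← Finset.card_univ]
    exact Finset.card_le_card (Finset.filter_subset _ _)
  have step1 : ∀ V : ι → ZMod 2,
      (if ∃ c ∈ C, wtf c ≤ 2 * (Finset.univ.filter fun i => supp c i = 1 ∧ V i = 1).card
       then ∏ i, (if V i = 1 then ε else 1-ε) else 0)
      ≤ (∑ c ∈ Cf,
          if wtf c ≤ 2 * (Finset.univ.filter fun i => supp c i = 1 ∧ V i = 1).card
          then ∏ i, (if V i = 1 then ε else 1-ε) else 0)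
        + (if ¬ (((Finset.univ.filter fun i => V i = 1).card : ℝ) ≤ (Fintype.card ι : ℝ) * q)
          then ∏ i, (if V i = 1 then ε else 1-ε) else 0) := by
    intro V
    have hterm : ∀ c' ∈ Cf, (0:ℝ) ≤
        if wtf c' ≤ 2 * (Finset.univ.filter fun i => supp c' i = 1 ∧ V i = 1).card
        then ∏ i, (if V i = 1 then ε else 1-ε) else 0 := fun c' _ => by
      split_ifs; exacts [hPnn V, le_refl 0]
    have hsumnn : (0:ℝ) ≤ ∑ c ∈ Cf,
        if wtf c ≤ 2 * (Finset.univ.filter fun i => supp c i = 1 ∧ V i = 1).card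
        then ∏ i, (if V i = 1 then ε else 1-ε) else 0 :=
      Finset.sum_nonneg hterm
    have hitenn : (0:ℝ) ≤
        (if ¬ (((Finset.univ.filter fun i => V i = 1).card : ℝ) ≤ (Fintype.card ι : ℝ) * q)
          then ∏ i, (if V i = 1 then ε else 1-ε) else 0) := by
      split_ifs; exacts [le_refl 0, hPnn V]
    by_cases hEV : ∃ c ∈ C,
        wtf c ≤ 2 * (Finset.univ.filter fun i => supp c i = 1 ∧ V i = 1).card
    · rw [if_pos hEV]
      by_cases hAV : ((Finset.univ.filter fun i => V i = 1).card : ℝ)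
          ≤ (Fintype.card ι : ℝ) * q
      · obtain ⟨c, hcC, hcev⟩ := hEV
        have hmm : (Finset.univ.filter fun i => supp c i = 1 ∧ V i = 1).card
            ≤ (Finset.univ.filter fun i => V i = 1).card := by
          apply Finset.card_le_card
          intro i hi
          simp only [Finset.mem_filter] at hi ⊢
          exact ⟨hi.1, hi.2.2⟩
        have hcB : (wtf c : ℝ) ≤ B := by
          have h1 : (wtf c : ℝ) ≤
              2 * ((Finset.univ.filter fun i => supp c i = 1 ∧ V i = 1).card : ℝ) := by
            exact_mod_cast hcev
          have h2 : ((Finset.univ.filter fun i => supp c i = 1 ∧ V i = 1).card : ℝ)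
              ≤ ((Finset.univ.filter fun i => V i = 1).card : ℝ) := by exact_mod_cast hmm
          linarith
        have hcCf : c ∈ Cf := Finset.mem_filter.mpr ⟨hcC, hcB⟩
        have hsingle : (if wtf c ≤ 2 *
              (Finset.univ.filter fun i => supp c i = 1 ∧ V i = 1).card
            then ∏ i, (if V i = 1 then ε else 1-ε) else 0)
            ≤ ∑ c ∈ Cf,
              if wtf c ≤ 2 * (Finset.univ.filter fun i => supp c i = 1 ∧ V i = 1).card
              then ∏ i, (if V i = 1 then ε else 1-ε) else 0 :=
          Finset.single_le_sum hterm hcCf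
        rw [if_pos hcev] at hsingle
        linarith
      · rw [if_pos hAV]
        linarith
    · rw [if_neg hEV]
      linarith
  have step2 : ∀ c ∈ Cf,
      (∑ V : ι → ZMod 2,
        if wtf c ≤ 2 * (Finset.univ.filter fun i => supp c i = 1 ∧ V i = 1).card
        then ∏ i, (if V i = 1 then ε else 1-ε) else 0)
      ≤ (4*ε*(1-ε)) ^ ((wtf c:ℝ)/2) := by
    intro c _
    have := event_bound ε hε0 hε1 (supp c)
    rw [← hwt c] at this
    exact this
  have group : ∑ c ∈ Cf, (4*ε*(1-ε)) ^ ((wtf c:ℝ)/2)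
      ≤ ∑ w ∈ Finset.range (Fintype.card ι + 1),
          if (∃ c ∈ C, wtf c ≤ w) ∧ (w:ℝ) ≤ B then
            ((C.filter fun c => wtf c = w).card : ℝ) * (4*ε*(1-ε)) ^ ((w:ℝ)/2) else 0 := by
    rw [← Finset.sum_fiberwise_of_maps_to (g := wtf) (t := Finset.range (Fintype.card ι + 1))
      (fun c _ => Finset.mem_range.mpr (Nat.lt_succ_of_le (hwtle c)))
      (fun c => (4*ε*(1-ε)) ^ ((wtf c:ℝ)/2))]
    apply Finset.sum_le_sum
    intro w hw
    have inner : (∑ c ∈ Cf.filter (fun c => wtf c = w), (4*ε*(1-ε)) ^ ((wtf c:ℝ)/2))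
        = ((Cf.filter fun c => wtf c = w).card : ℝ) * (4*ε*(1-ε)) ^ ((w:ℝ)/2) := by
      rw [Finset.sum_congr rfl (fun c hc => by rw [(Finset.mem_filter.mp hc).2]),
        Finset.sum_const, nsmul_eq_mul]
    rw [inner]
    by_cases hcond : (∃ c ∈ C, wtf c ≤ w) ∧ (w:ℝ) ≤ B
    · rw [if_pos hcond]
      apply mul_le_mul_of_nonneg_right _ (Real.rpow_nonneg h4nn _)
      have hsub : Cf.filter (fun c => wtf c = w) ⊆ C.filter (fun c => wtf c = w) :=
        Finset.filter_subset_filter _ (Finset.filter_subset _ _)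
      exact_mod_cast Finset.card_le_card hsub
    · rw [if_neg hcond]
      have hemp : Cf.filter (fun c => wtf c = w) = ∅ := by
        rw [Finset.filter_eq_empty_iff]
        intro c hc
        intro hwc
        rcases Finset.mem_filter.mp hc with ⟨hcC, hcB⟩
        exact hcond ⟨⟨c, hcC, le_of_eq hwc⟩, by rw [← hwc]; exact hcB⟩
      rw [hemp]
      simp
  have cher := chernoff_sum (ι := ι) ε q hε0 hεq hq1
  calc ∑ V : ι → ZMod 2,
      (if ∃ c ∈ C, wtf c ≤ 2 * (Finset.univ.filter fun i => supp c i = 1 ∧ V i = 1).card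
       then ∏ i, (if V i = 1 then ε else 1-ε) else 0)
      ≤ ∑ V : ι → ZMod 2,
        ((∑ c ∈ Cf,
          if wtf c ≤ 2 * (Finset.univ.filter fun i => supp c i = 1 ∧ V i = 1).card
          then ∏ i, (if V i = 1 then ε else 1-ε) else 0)
        + (if ¬ (((Finset.univ.filter fun i => V i = 1).card : ℝ) ≤ (Fintype.card ι : ℝ) * q)
          then ∏ i, (if V i = 1 then ε else 1-ε) else 0)) :=
        Finset.sum_le_sum fun V _ => step1 V
    _ = (∑ V : ι → ZMod 2, ∑ c ∈ Cf,
          if wtf c ≤ 2 * (Finset.univ.filter fun i => supp c i = 1 ∧ V i = 1).card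
          then ∏ i, (if V i = 1 then ε else 1-ε) else 0)
        + ∑ V : ι → ZMod 2,
          (if ¬ (((Finset.univ.filter fun i => V i = 1).card : ℝ) ≤ (Fintype.card ι : ℝ) * q)
          then ∏ i, (if V i = 1 then ε else 1-ε) else 0) := Finset.sum_add_distrib
    _ ≤ (∑ w ∈ Finset.range (Fintype.card ι + 1),
          if (∃ c ∈ C, wtf c ≤ w) ∧ (w:ℝ) ≤ B then
            ((C.filter fun c => wtf c = w).card : ℝ) * (4*ε*(1-ε)) ^ ((w:ℝ)/2) else 0)
        + 2 ^ (-(Fintype.card ι : ℝ) *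
            (q * Real.logb 2 (q/ε) + (1-q) * Real.logb 2 ((1-q)/(1-ε)))) := by
        apply add_le_add _ cher
        rw [Finset.sum_comm]
        exact le_trans (Finset.sum_le_sum step2) group

end Helpers

set_option maxHeartbeats 1000000 in
open scoped Classical in
theorem bsc_tighter_union_bound
    (k n : ℕ) (hk : 0 < k) (hkn : k < n)
    (Hs : ℕ → Matrix (Fin (n - k)) (Fin n) (ZMod 2))
    (d : ℕ) (hd : 0 < d)
    (ε δ : ℝ) (hε0 : 0 < ε) (hε1 : ε < 1 / 2) (hδ : 0 < δ) (hεδ : ε + δ < 1) :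
    (∑ V : Fin d × Fin n → ZMod 2,
        (if ∃ c ∈ Cset (n - k) n Hs d hd,
            wt c ≤ 2 * (Finset.univ.filter fun i => flat c i = 1 ∧ V i = 1).card then
          ∏ i, (if V i = 1 then ε else 1 - ε) else 0)
      ≤ (∑ w ∈ Finset.range (n * d + 1),
          if (∃ c ∈ Cset (n - k) n Hs d hd, wt c ≤ w) ∧ (w : ℝ) ≤ 2 * n * d * (ε + δ) then
            (numW (n - k) n Hs d hd w : ℝ) * (4 * ε * (1 - ε)) ^ ((w : ℝ) / 2)
          else 0)
        + 2 ^ (-((n * d : ℕ) : ℝ) *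
            ((ε + δ) * Real.logb 2 ((ε + δ) / ε) +
              (1 - (ε + δ)) * Real.logb 2 ((1 - (ε + δ)) / (1 - ε)))))
    ∧ ((∀ c ∈ Cset (n - k) n Hs d hd, 2 * n * d * (ε + δ) < (wt c : ℝ)) →
      ∑ V : Fin d × Fin n → ZMod 2,
          (if ∃ c ∈ Cset (n - k) n Hs d hd,
              wt c ≤ 2 * (Finset.univ.filter fun i => flat c i = 1 ∧ V i = 1).card then
            ∏ i, (if V i = 1 then ε else 1 - ε) else 0)
        ≤ 2 ^ (-((n * d : ℕ) : ℝ) *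
            ((ε + δ) * Real.logb 2 ((ε + δ) / ε) +
              (1 - (ε + δ)) * Real.logb 2 ((1 - (ε + δ)) / (1 - ε))))) := by
  classical
  have hcard : Fintype.card (Fin d × Fin n) = n * d := by
    simp [mul_comm]
  have hεq : ε < ε + δ := by linarith
  have hB : 2 * ((n*d : ℕ):ℝ) * (ε + δ) ≤ 2 * (n:ℝ) * (d:ℝ) * (ε + δ) :=
    le_of_eq (by push_cast; ring)
  have main := main_bound (ι := Fin d × Fin n) (α := Fin d → Fin n → ZMod 2)
    ε (ε+δ) (2 * (n:ℝ) * (d:ℝ) * (ε+δ)) hε0 hε1 hεq hεδ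
    (Cset (n-k) n Hs d hd) wt flat (fun c => rfl) (n*d) hcard hB
  refine ⟨main, fun hmin => ?_⟩
  refine le_trans main (le_of_eq ?_)
  have hz : ∀ w ∈ Finset.range (n*d+1),
      (if (∃ c ∈ Cset (n-k) n Hs d hd, wt c ≤ w) ∧ (w:ℝ) ≤ 2 * n * d * (ε + δ) then
        ((((Cset (n-k) n Hs d hd).filter fun c => wt c = w).card : ℕ) : ℝ) * (4*ε*(1-ε)) ^ ((w:ℝ)/2) else 0) = 0 := by
    intro w hw
    rw [if_neg]
    rintro ⟨⟨c, hcC, hwc⟩, hwB⟩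
    have h1 := hmin c hcC
    have h2 : (wt c : ℝ) ≤ (w:ℝ) := by exact_mod_cast hwc
    linarith
  rw [Finset.sum_eq_zero hz, zero_add]
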